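/- Let ℓ : R^n → R be a linear form and y^{(1)},…,y^{(p)} ∈ R^n. Define ℓ̄ : R^n × R^p → R by ℓ̄(x,u) = ℓ(x) + Σ_{k=1}^p ℓ(y^{(k)}) u_k. Suppose x ∈ R^n_{≥0}, u ∈ R^p_{≥0}, and (x⁰, u⁰) ∈ R^n_{>0} × R^p_{>0} satisfy ℓ̄(x,u) = ℓ̄(x⁰,u⁰), and suppose u_k = μ_k x^{y^{(k)}} for positive constants μ_k, where the supports satisfy: x^{y^{(k)}} ≠ 0 implies {j : y^{(k)}_j ≠ 0} ⊆ {j : x_j > 0}. Set v⁰ = x⁰ + Σ_k (u⁰_k − μ_k x^{y^{(k)}}) y^{(k)} and v_α = α v⁰ + (1−α) x. Then ℓ(x) = ℓ(v⁰), and there exists α₀ ∈ (0,1] such that v_{α₀} ∈ R^n_{>0}; in particular there is a strictly positive point (x')⁰ with ℓ(x) = ℓ((x')⁰). -/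

import Mathlib

/-- Convexity/support lemma: from ℓ̄(x,u) = ℓ̄(x⁰,u⁰) with u_k = μ_k x^{y^{(k)}} one
gets ℓ(x) = ℓ(v⁰), and some point v_{α₀} on the segment from x to v⁰ is strictly
positive. -/
theorem stmt_17 {n p : ℕ} (ℓ : (Fin n → ℝ) →ₗ[ℝ] ℝ)
    (y : Fin p → Fin n → ℕ) (μ : Fin p → ℝ) (hμ : ∀ k, 0 < μ k)
    (x : Fin n → ℝ) (hx : ∀ j, 0 ≤ x j)
    (u : Fin p → ℝ) (hu0 : ∀ k, 0 ≤ u k)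
    (x0 : Fin n → ℝ) (hx0 : ∀ j, 0 < x0 j)
    (u0 : Fin p → ℝ) (hu0' : ∀ k, 0 < u0 k)
    (hu : ∀ k, u k = μ k * ∏ j, x j ^ y k j)
    (hsupp : ∀ k, (∏ j, x j ^ y k j) ≠ 0 → ∀ j, y k j ≠ 0 → 0 < x j)
    (hcons : ℓ x + ∑ k, ℓ (fun j => (y k j : ℝ)) * u k
           = ℓ x0 + ∑ k, ℓ (fun j => (y k j : ℝ)) * u0 k) :
    ℓ x = ℓ (fun j => x0 j + ∑ k, (u0 k - μ k * ∏ l, x l ^ y k l) * (y k j : ℝ)) ∧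
    ∃ α ∈ Set.Ioc (0 : ℝ) 1, ∀ j,
      0 < α * (x0 j + ∑ k, (u0 k - μ k * ∏ l, x l ^ y k l) * (y k j : ℝ))
            + (1 - α) * x j := by
  set v : Fin n → ℝ := fun j => x0 j + ∑ k, (u0 k - μ k * ∏ l, x l ^ y k l) * (y k j : ℝ)
    with hvdef
  -- Part 1
  have h1 : ℓ x = ℓ v := by
    have hveq : v = x0 + ∑ k, (u0 k - μ k * ∏ l, x l ^ y k l) • (fun j => (y k j : ℝ)) := by
      funext j
      simp [hvdef, Finset.sum_apply, smul_eq_mul]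
    have hlv : ℓ v = ℓ x0 + ∑ k, (u0 k - μ k * ∏ l, x l ^ y k l) * ℓ (fun j => (y k j : ℝ)) := by
      rw [hveq, map_add, map_sum]
      simp [smul_eq_mul]
    have hsum : ∑ k, (u0 k - μ k * ∏ l, x l ^ y k l) * ℓ (fun j => (y k j : ℝ))
        = (∑ k, ℓ (fun j => (y k j : ℝ)) * u0 k) - ∑ k, ℓ (fun j => (y k j : ℝ)) * u k := by
      rw [← Finset.sum_sub_distrib]
      apply Finset.sum_congr rfl
      intro k _
      rw [hu k]; ring
    rw [hlv, hsum]
    linarith [hcons]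
  refine ⟨h1, ?_⟩
  -- if x j = 0 then v j > 0
  have hvx : ∀ j, v j ≤ 0 → 0 < x j := by
    intro j hvj
    rcases (hx j).lt_or_eq with h | h
    · exact h
    · exfalso
      have hterm : ∀ k ∈ Finset.univ, (0:ℝ) ≤ (u0 k - μ k * ∏ l, x l ^ y k l) * (y k j : ℝ) := by
        intro k _
        by_cases hy : y k j = 0
        · simp [hy]
        · have hp : (∏ l, x l ^ y k l) = 0 := by
            by_contra hp
            exact absurd (hsupp k hp j hy) (by rw [← h]; simp)
          rw [hp]
          have : (0:ℝ) ≤ (y k j : ℝ) := Nat.cast_nonneg _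
          nlinarith [hu0' k]
      have : (0:ℝ) < v j := by
        have := Finset.sum_nonneg hterm
        have := hx0 j
        simp only [hvdef]
        linarith
      linarith
  -- choose α
  classical
  set S : Finset (Fin n) := Finset.univ.filter (fun j => v j ≤ 0) with hS
  set g : Fin n → ℝ := fun j => x j / (2 * (x j - v j)) with hg
  set T : Finset ℝ := insert (1:ℝ) (S.image g) with hT
  have hTne : T.Nonempty := ⟨1, Finset.mem_insert_self _ _⟩
  set α : ℝ := T.min' hTne with hα
  have hα1 : α ≤ 1 := Finset.min'_le _ _ (Finset.mem_insert_self _ _)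
  have hgpos : ∀ j ∈ S, 0 < g j := by
    intro j hj
    have hvj : v j ≤ 0 := (Finset.mem_filter.mp hj).2
    have hxj : 0 < x j := hvx j hvj
    have : 0 < x j - v j := by linarith
    exact div_pos hxj (by linarith)
  have hαpos : 0 < α := by
    rw [hα]
    rw [Finset.lt_min'_iff]
    intro b hb
    rcases Finset.mem_insert.mp hb with h | h
    · simp [h]
    · obtain ⟨j, hj, rfl⟩ := Finset.mem_image.mp h
      exact hgpos j hj
  refine ⟨α, ⟨hαpos, hα1⟩, ?_⟩
  intro j
  rcases le_or_gt (v j) 0 with hvj | hvj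
  · have hjS : j ∈ S := Finset.mem_filter.mpr ⟨Finset.mem_univ _, hvj⟩
    have hxj : 0 < x j := hvx j hvj
    have hxv : 0 < x j - v j := by linarith
    have hαg : α ≤ g j :=
      Finset.min'_le _ _ (Finset.mem_insert_of_mem (Finset.mem_image_of_mem g hjS))
    have hkey : α * (x j - v j) ≤ x j / 2 := by
      have h2 : g j * (x j - v j) = x j / 2 := by
        simp only [hg]
        rw [div_mul_eq_mul_div, div_eq_div_iff (mul_pos two_pos hxv).ne' two_ne_zero]
        ring
      nlinarith
    have : α * v j + (1 - α) * x j = x j - α * (x j - v j) := by ring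
    rw [hvdef] at *
    linarith
  · have h1' : 0 < α * v j := mul_pos hαpos hvj
    have h2' : 0 ≤ (1 - α) * x j := mul_nonneg (by linarith) (hx j)
    have := hvdef
    simp only [hvdef] at h1'
    linarith
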